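/- Let f_s : R^n → R be differentiable with L-Lipschitz gradient, and suppose for a point x and h > 0 that f_s(x + h w) ≥ f_s(x) for all w in a positive spanning set W with ‖w_j‖ ≤ 1. Then ‖∇f_s(x)‖ ≤ (L h)/(2 c_W), where c_W = min over unit vectors u of max_j ⟨−u, w_j⟩/‖w_j‖ is the cosine measure of W, which is strictly positive. -/

import Mathlib

open scoped RealInnerProductSpace

theorem stencil_aux {n : ℕ} (fs : EuclideanSpace ℝ (Fin n) → ℝ)
    (g : EuclideanSpace ℝ (Fin n) → EuclideanSpace ℝ (Fin n))
    (hg : ∀ x, HasGradientAt fs (g x) x)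
    (L : ℝ) (hL0 : 0 ≤ L) (hL : ∀ y z, ‖g y - g z‖ ≤ L * ‖y - z‖)
    (x v : EuclideanSpace ℝ (Fin n)) :
    fs (x + v) - fs x - ⟪g x, v⟫ ≤ L / 2 * ‖v‖ ^ 2 := by
  have hgcont : Continuous g :=
    (LipschitzWith.of_dist_le_mul (K := ⟨L, hL0⟩) (fun y z => by
      rw [dist_eq_norm, dist_eq_norm]; exact hL y z)).continuous
  have hderiv : ∀ t : ℝ, HasDerivAt (fun t : ℝ => fs (x + t • v)) ⟪g (x + t • v), v⟫ t := by
    intro t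
    have h1 : HasDerivAt (fun t : ℝ => x + t • v) v t := by
      simpa using ((hasDerivAt_id t).smul_const v).const_add x
    have h2 := (hg (x + t • v)).hasFDerivAt
    have h3 := h2.comp_hasDerivAt t h1
    simp [InnerProductSpace.toDual_apply_apply] at h3
    exact h3
  have hcont1 : Continuous fun t : ℝ => ⟪g (x + t • v), v⟫ := by
    apply Continuous.inner
    · exact hgcont.comp (continuous_const.add (continuous_id.smul continuous_const))
    · exact continuous_const
  have e1 : ∫ t in (0:ℝ)..1, ⟪g (x + t • v), v⟫ = fs (x + v) - fs x := by
    have := intervalIntegral.integral_eq_sub_of_hasDerivAt (f := fun t : ℝ => fs (x + t • v))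
      (fun t _ => hderiv t) (hcont1.intervalIntegrable 0 1)
    simpa using this
  have e2 : ∫ t in (0:ℝ)..1, ⟪g x, v⟫ = ⟪g x, v⟫ := by simp
  have hsub : fs (x + v) - fs x - ⟪g x, v⟫
      = ∫ t in (0:ℝ)..1, (⟪g (x + t • v), v⟫ - ⟪g x, v⟫) := by
    rw [intervalIntegral.integral_sub (hcont1.intervalIntegrable 0 1)
      (intervalIntegrable_const), e1, e2]
  rw [hsub]
  have hb : ∀ t ∈ Set.Icc (0:ℝ) 1, ⟪g (x + t • v), v⟫ - ⟪g x, v⟫ ≤ L * ‖v‖ ^ 2 * t := by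
    intro t ht
    have h1 : ⟪g (x + t • v), v⟫ - ⟪g x, v⟫ = ⟪g (x + t • v) - g x, v⟫ := by
      rw [inner_sub_left]
    rw [h1]
    calc ⟪g (x + t • v) - g x, v⟫ ≤ ‖g (x + t • v) - g x‖ * ‖v‖ := real_inner_le_norm _ _
      _ ≤ (L * ‖x + t • v - x‖) * ‖v‖ := by
          exact mul_le_mul_of_nonneg_right (hL _ _) (norm_nonneg _)
      _ = L * ‖v‖ ^ 2 * t := by
          rw [add_sub_cancel_left, norm_smul, Real.norm_eq_abs, abs_of_nonneg ht.1]
          ring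
  calc ∫ t in (0:ℝ)..1, (⟪g (x + t • v), v⟫ - ⟪g x, v⟫)
      ≤ ∫ t in (0:ℝ)..1, L * ‖v‖ ^ 2 * t := by
        apply intervalIntegral.integral_mono_on zero_le_one
          ((hcont1.sub continuous_const).intervalIntegrable 0 1)
          ((continuous_const.mul continuous_id).intervalIntegrable 0 1) hb
    _ = L / 2 * ‖v‖ ^ 2 := by
        rw [intervalIntegral.integral_const_mul, integral_id]
        ring

/-- Stencil failure over a positive spanning set `W` with `‖w j‖ ≤ 1` bounds the
gradient: `‖∇fs x‖ ≤ L h / (2 c_W)`, where the cosine measure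
`c_W = min_{‖u‖ = 1} max_j ⟪-u, w j⟫ / ‖w j‖` is strictly positive. -/
theorem stencil_failure_positive_spanning_bound {n J : ℕ} (hn : 0 < n)
    (fs : EuclideanSpace ℝ (Fin n) → ℝ)
    (g : EuclideanSpace ℝ (Fin n) → EuclideanSpace ℝ (Fin n))
    (hg : ∀ x, HasGradientAt fs (g x) x)
    (L : ℝ) (hL : ∀ y z, ‖g y - g z‖ ≤ L * ‖y - z‖)
    (w : Fin J → EuclideanSpace ℝ (Fin n))
    (hw0 : ∀ j, w j ≠ 0) (hw1 : ∀ j, ‖w j‖ ≤ 1)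
    (hspan : ∀ x : EuclideanSpace ℝ (Fin n),
      ∃ a : Fin J → ℝ, (∀ j, 0 ≤ a j) ∧ x = ∑ j, a j • w j)
    (x : EuclideanSpace ℝ (Fin n)) (h : ℝ) (hh : 0 < h)
    (hfail : ∀ j, fs (x + h • w j) ≥ fs x)
    (cW : ℝ)
    (hcW : cW = ⨅ u : {u : EuclideanSpace ℝ (Fin n) // ‖u‖ = 1},
      ⨆ j, (inner ℝ (-(u : EuclideanSpace ℝ (Fin n))) (w j) : ℝ) / ‖w j‖) :
    0 < cW ∧ ‖g x‖ ≤ L * h / (2 * cW) := by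
  -- a unit vector
  obtain ⟨u0, hu0n⟩ : ∃ u0 : EuclideanSpace ℝ (Fin n), ‖u0‖ = 1 :=
    ⟨EuclideanSpace.single ⟨0, hn⟩ (1:ℝ), by
      rw [EuclideanSpace.norm_single]; norm_num⟩
  -- L ≥ 0
  have hL0 : 0 ≤ L := by
    have := hL u0 0
    simp only [sub_zero, hu0n, mul_one] at this
    exact le_trans (norm_nonneg _) this
  -- J > 0
  have hJ : 0 < J := by
    rcases Nat.eq_zero_or_pos J with rfl | hJ
    · obtain ⟨a, _, ha⟩ := hspan u0
      simp only [Finset.univ_eq_empty, Finset.sum_empty] at ha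
      rw [ha] at hu0n
      simp at hu0n
    · exact hJ
  haveI : Nonempty (Fin J) := ⟨⟨0, hJ⟩⟩
  haveI : Nonempty {u : EuclideanSpace ℝ (Fin n) // ‖u‖ = 1} := ⟨⟨u0, hu0n⟩⟩
  -- the function F
  set F : EuclideanSpace ℝ (Fin n) → ℝ :=
    fun u => ⨆ j, (⟪-u, w j⟫ : ℝ) / ‖w j‖ with hF
  -- F is 1-Lipschitz
  have hFbdd : ∀ u : EuclideanSpace ℝ (Fin n),
      BddAbove (Set.range fun j => (⟪-u, w j⟫ : ℝ) / ‖w j‖) := fun u =>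
    Set.Finite.bddAbove (Set.finite_range _)
  have hFlip : ∀ u v : EuclideanSpace ℝ (Fin n), F u ≤ F v + ‖u - v‖ := by
    intro u v
    apply ciSup_le
    intro j
    have hwj : 0 < ‖w j‖ := norm_pos_iff.mpr (hw0 j)
    have h1 : (⟪-u, w j⟫ : ℝ) / ‖w j‖ ≤ (⟪-v, w j⟫ : ℝ) / ‖w j‖ + ‖u - v‖ := by
      rw [div_add' _ _ _ (ne_of_gt hwj), div_le_div_iff_of_pos_right hwj]
      have he : (⟪-u, w j⟫ : ℝ) - ⟪-v, w j⟫ = ⟪v - u, w j⟫ := by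
        rw [← inner_sub_left]; congr 1; abel
      have h2 : (⟪v - u, w j⟫ : ℝ) ≤ ‖v - u‖ * ‖w j‖ := real_inner_le_norm _ _
      have h3 : ‖v - u‖ = ‖u - v‖ := norm_sub_rev _ _
      nlinarith [hw1 j, norm_nonneg (u - v)]
    exact h1.trans (add_le_add_left (le_ciSup (hFbdd v) j) _)
  have hFcont : Continuous F := by
    apply (LipschitzWith.of_dist_le_mul (K := 1) (fun u v => ?_)).continuous
    rw [Real.dist_eq, dist_eq_norm, NNReal.coe_one, one_mul, abs_le]
    constructor
    · have := hFlip v u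
      rw [norm_sub_rev] at this
      linarith
    · have := hFlip u v
      linarith
  -- F positive on unit vectors
  have hFpos : ∀ u : EuclideanSpace ℝ (Fin n), ‖u‖ = 1 → 0 < F u := by
    intro u hu
    obtain ⟨a, ha0, ha⟩ := hspan (-u)
    have h1 : (⟪-u, -u⟫ : ℝ) = 1 := by
      rw [real_inner_self_eq_norm_sq, norm_neg, hu]; norm_num
    have h2 : ∑ j, a j * ⟪-u, w j⟫ = (1:ℝ) := by
      have hsum : (⟪-u, ∑ j, a j • w j⟫ : ℝ) = ∑ j, a j * ⟪-u, w j⟫ := by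
        rw [inner_sum]
        congr 1; funext j; rw [real_inner_smul_right]
      rw [← hsum, ← ha, h1]
    have h3 : ∃ j : Fin J, 0 < a j * ⟪-u, w j⟫ := by
      by_contra hc
      push_neg at hc
      have hs : ∑ j, a j * ⟪-u, w j⟫ ≤ 0 := Finset.sum_nonpos (fun j _ => hc j)
      rw [h2] at hs; linarith
    obtain ⟨j, hj⟩ := h3
    have hinner : 0 < (⟪-u, w j⟫ : ℝ) := by
      by_contra hc
      push_neg at hc
      nlinarith [ha0 j]
    have hwj : 0 < ‖w j‖ := norm_pos_iff.mpr (hw0 j)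
    calc (0:ℝ) < (⟪-u, w j⟫ : ℝ) / ‖w j‖ := div_pos hinner hwj
      _ ≤ F u := le_ciSup (hFbdd u) j
  -- minimizer on sphere
  have hS : IsCompact (Metric.sphere (0 : EuclideanSpace ℝ (Fin n)) 1) := isCompact_sphere 0 1
  have hSne : (Metric.sphere (0 : EuclideanSpace ℝ (Fin n)) 1).Nonempty :=
    ⟨u0, by simpa [mem_sphere_zero_iff_norm] using hu0n⟩
  obtain ⟨us, husS, husmin⟩ := hS.exists_isMinOn hSne hFcont.continuousOn
  rw [mem_sphere_zero_iff_norm] at husS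
  have hmin : ∀ u : EuclideanSpace ℝ (Fin n), ‖u‖ = 1 → F us ≤ F u := by
    intro u hu
    exact husmin (by simpa [mem_sphere_zero_iff_norm] using hu)
  have hbdd : BddBelow (Set.range fun u : {u : EuclideanSpace ℝ (Fin n) // ‖u‖ = 1} =>
      ⨆ j, (⟪-(u : EuclideanSpace ℝ (Fin n)), w j⟫ : ℝ) / ‖w j‖) := by
    refine ⟨F us, ?_⟩
    rintro y ⟨⟨u, hu⟩, rfl⟩
    exact hmin u hu
  have hcWge : F us ≤ cW := by
    rw [hcW]
    exact le_ciInf fun u => hmin u.1 u.2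
  have hcWpos : 0 < cW := lt_of_lt_of_le (hFpos us husS) hcWge
  refine ⟨hcWpos, ?_⟩
  -- per-direction bound
  have hdir : ∀ j, (⟪-(g x), w j⟫ : ℝ) / ‖w j‖ ≤ L * h / 2 := by
    intro j
    have hkey := stencil_aux fs g hg L hL0 hL x (h • w j)
    have hge := hfail j
    have h1 : -(⟪g x, h • w j⟫ : ℝ) ≤ L / 2 * ‖h • w j‖ ^ 2 := by linarith
    have h2 : ‖h • w j‖ = h * ‖w j‖ := by
      rw [norm_smul, Real.norm_eq_abs, abs_of_pos hh]
    have h3 : (⟪-(g x), w j⟫ : ℝ) * h ≤ L / 2 * (h * ‖w j‖) ^ 2 := by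
      rw [inner_neg_left]
      have hsm : (⟪g x, h • w j⟫ : ℝ) = h * ⟪g x, w j⟫ := real_inner_smul_right _ _ _
      rw [hsm, h2] at h1
      linarith
    have hwj : 0 < ‖w j‖ := norm_pos_iff.mpr (hw0 j)
    have h4 : (⟪-(g x), w j⟫ : ℝ) ≤ L / 2 * h * ‖w j‖ ^ 2 := by
      have h5 : (⟪-(g x), w j⟫ : ℝ) * h ≤ (L / 2 * h * ‖w j‖ ^ 2) * h := by nlinarith [h3]
      exact le_of_mul_le_mul_right h5 hh
    rw [div_le_iff₀ hwj]
    nlinarith [h4, mul_nonneg (mul_nonneg hL0 hh.le) hwj.le, hw1 j]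
  -- conclude
  rcases eq_or_ne (g x) 0 with hg0 | hg0
  · rw [hg0]
    simp only [norm_zero]
    positivity
  · have hgn : 0 < ‖g x‖ := norm_pos_iff.mpr hg0
    set u : EuclideanSpace ℝ (Fin n) := ‖g x‖⁻¹ • g x with hu
    have hun : ‖u‖ = 1 := norm_smul_inv_norm hg0
    have hcWle : cW ≤ F u := by
      rw [hcW]
      exact ciInf_le hbdd ⟨u, hun⟩
    have hFle : F u ≤ (L * h / 2) / ‖g x‖ := by
      apply ciSup_le
      intro j
      have he : (⟪-u, w j⟫ : ℝ) = ‖g x‖⁻¹ * ⟪-(g x), w j⟫ := by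
        rw [hu, ← smul_neg, real_inner_smul_left]
      rw [he, mul_div_assoc, div_eq_mul_inv (L * h / 2), mul_comm (L * h / 2)]
      exact mul_le_mul_of_nonneg_left (hdir j) (inv_nonneg.mpr hgn.le)
    have hfinal : cW ≤ (L * h / 2) / ‖g x‖ := hcWle.trans hFle
    rw [le_div_iff₀ hgn] at hfinal
    rw [le_div_iff₀ (by positivity : (0:ℝ) < 2 * cW)]
    linarith
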